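/- Let G be a finite simple graph and T a spanning tree of G such that every vertex of G outside a given subtree T₀ is adjacent to a fixed vertex u₃, the subtree T₀ satisfies: every vertex of T₀ other than u₃ has degree 1 or degree at least 3 in T₀, and |V(G)| − |V(T₀)| + deg_{T₀}(u₃) − 3 ≥ 0. Then the tree T' obtained from T₀ by joining u₃ to every vertex of V(G) \ V(T₀) is a spanning tree of G in which no vertex has degree 2. -/

import Mathlib

open SimpleGraph

private def auxHom {V : Type*} {G : SimpleGraph V} (H : G.Subgraph) :
    H.coe →g H.spanningCoe :=
  ⟨Subtype.val, fun {_ _} h => h⟩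

private lemma aux_lift_walk {V : Type*} {G : SimpleGraph V} {H : G.Subgraph} {a b : V}
    (p : H.spanningCoe.Walk a b) :
    ∀ (ha : a ∈ H.verts),
      ∃ (hb : b ∈ H.verts) (q : H.coe.Walk ⟨a, ha⟩ ⟨b, hb⟩),
        q.map (auxHom H) = p := by
  induction p with
  | nil => exact fun ha => ⟨ha, .nil, rfl⟩
  | @cons u v w h p ih =>
    intro ha
    have h' : H.Adj u v := h
    have hv : v ∈ H.verts := H.edge_vert (H.adj_symm h')
    obtain ⟨hb, q, hq⟩ := ih hv
    have hadj : H.coe.Adj ⟨u, ha⟩ ⟨v, hv⟩ := h'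
    exact ⟨hb, Walk.cons hadj q, by rw [Walk.map_cons, hq]; rfl⟩

theorem stmt_7 {V : Type*} [Fintype V] (G : SimpleGraph V) (T₀ : G.Subgraph) (u₃ : V)
    (hu₃ : u₃ ∈ T₀.verts)
    (htree : T₀.coe.IsTree)
    (hadj : ∀ v : V, v ∉ T₀.verts → G.Adj u₃ v)
    (hdeg : ∀ v ∈ T₀.verts, v ≠ u₃ →
      (T₀.neighborSet v).ncard = 1 ∨ 3 ≤ (T₀.neighborSet v).ncard)
    (hcard : (T₀.verts.ncard : ℤ) ≤ (Fintype.card V : ℤ) + ((T₀.neighborSet u₃).ncard : ℤ) - 3)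
    (T' : G.Subgraph)
    (hT'verts : T'.verts = Set.univ)
    (hT'adj : ∀ a b : V, T'.Adj a b ↔ (T₀.Adj a b ∨
      (a = u₃ ∧ b ∉ T₀.verts ∧ G.Adj a b) ∨ (b = u₃ ∧ a ∉ T₀.verts ∧ G.Adj b a))) :
    T'.coe.IsTree ∧ ∀ v : V, (T'.neighborSet v).ncard ≠ 2 := by
  classical
  have hle : ∀ {a b : V}, T₀.Adj a b → T'.Adj a b := fun h => (hT'adj _ _).2 (Or.inl h)
  have houtside : ∀ {x w : V}, x ∉ T₀.verts → T'.Adj x w → w = u₃ := by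
    intro x w hx h
    rcases (hT'adj x w).1 h with h | ⟨hxu, _, _⟩ | ⟨hw, _, _⟩
    · exact absurd h.fst_mem hx
    · exact absurd (hxu ▸ hu₃) hx
    · exact hw
  -- degree computations
  have hnbr_out : ∀ x : V, x ∉ T₀.verts → T'.neighborSet x = {u₃} := by
    intro x hx
    ext w
    simp only [Subgraph.mem_neighborSet, Set.mem_singleton_iff]
    constructor
    · exact houtside hx
    · intro hw
      rw [hw]
      exact (hT'adj x u₃).2 (Or.inr (Or.inr ⟨rfl, hx, hadj x hx⟩))
  have hnbr_mid : ∀ v, v ∈ T₀.verts → v ≠ u₃ → T'.neighborSet v = T₀.neighborSet v := by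
    intro v hv hvne
    ext w
    simp only [Subgraph.mem_neighborSet]
    constructor
    · intro h
      rcases (hT'adj v w).1 h with h | ⟨h1, _, _⟩ | ⟨_, h2, _⟩
      · exact h
      · exact absurd h1 hvne
      · exact absurd hv h2
    · exact fun h => hle h
  have hnbr_u : T'.neighborSet u₃ = T₀.neighborSet u₃ ∪ T₀.vertsᶜ := by
    ext w
    simp only [Subgraph.mem_neighborSet, Set.mem_union, Set.mem_compl_iff]
    constructor
    · intro h
      rcases (hT'adj u₃ w).1 h with h | ⟨_, h2, _⟩ | ⟨hw, h2, _⟩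
      · exact Or.inl h
      · exact Or.inr h2
      · exact absurd hu₃ h2
    · rintro (h | h)
      · exact hle h
      · exact (hT'adj u₃ w).2 (Or.inr (Or.inl ⟨rfl, h, hadj w h⟩))
  have hdeg' : ∀ v : V, (T'.neighborSet v).ncard ≠ 2 := by
    intro v
    by_cases hv : v ∈ T₀.verts
    · by_cases hvu : v = u₃
      · subst hvu
        have hsub : T₀.neighborSet v ⊆ T₀.verts := fun w hw => Subgraph.Adj.snd_mem hw
        have hdisj : Disjoint (T₀.neighborSet v) T₀.vertsᶜ :=
          disjoint_compl_right.mono_left hsub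
        rw [hnbr_u, Set.ncard_union_eq hdisj (Set.toFinite _) (Set.toFinite _)]
        have h1 := Set.ncard_add_ncard_compl T₀.verts (Set.toFinite _) (Set.toFinite _)
        rw [Nat.card_eq_fintype_card] at h1
        omega
      · rw [hnbr_mid v hv hvu]
        rcases hdeg v hv hvu with h | h <;> omega
    · rw [hnbr_out v hv, Set.ncard_singleton]
      omega
  -- no cycle in the spanning coe of T'
  have hacyc : ∀ (w : V) (c : T'.spanningCoe.Walk w w), ¬ c.IsCycle := by
    intro w c hc
    have hsupp : ∀ x ∈ c.support, x ∈ T₀.verts := by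
      intro x hx
      by_contra hxv
      have hdc : (c.rotate x hx).IsCycle := hc.rotate hx
      obtain ⟨y, hxy, q, hq⟩ := Walk.not_nil_iff.1 hdc.not_nil
      have h3 := hdc.three_le_length
      rw [hq] at h3 hdc
      have hqlen : 2 ≤ q.length := by simpa using h3
      have hqrev : ¬ q.reverse.Nil := by
        rw [Walk.not_nil_iff_lt_length, Walk.length_reverse]
        omega
      obtain ⟨z, hxz, q', hq'⟩ := Walk.not_nil_iff.1 hqrev
      have hy : y = u₃ := houtside hxv hxy
      have hz : z = u₃ := houtside hxv hxz
      have hyz : z = y := hz.trans hy.symm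
      subst hyz
      have hmem : s(x, z) ∈ q.edges := by
        have : s(x, z) ∈ q.reverse.edges := by
          rw [hq']
          simp
        rwa [Walk.edges_reverse, List.mem_reverse] at this
      have hnodup := hdc.isCircuit.isTrail.edges_nodup
      rw [Walk.edges_cons, List.nodup_cons] at hnodup
      exact hnodup.1 hmem
    have hedges : ∀ e ∈ c.edges, e ∈ T₀.spanningCoe.edgeSet := by
      intro e he
      induction e using Sym2.ind with
      | _ a b =>
        have ha := hsupp a (c.fst_mem_support_of_mem_edges he)
        have hb := hsupp b (c.snd_mem_support_of_mem_edges he)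
        have hab : T'.Adj a b := c.adj_of_mem_edges he
        rcases (hT'adj a b).1 hab with h | ⟨_, h2, _⟩ | ⟨_, h2, _⟩
        · exact h
        · exact absurd hb h2
        · exact absurd ha h2
    have hc₀ : (c.transfer T₀.spanningCoe hedges).IsCycle := hc.transfer hedges
    have hw : w ∈ T₀.verts := hsupp w c.start_mem_support
    obtain ⟨hw', q, hq⟩ := aux_lift_walk (c.transfer T₀.spanningCoe hedges) hw
    have hinj : Function.Injective ⇑(auxHom T₀) := Subtype.val_injective
    have hqc : q.IsCycle := by
      apply (Walk.map_isCycle_iff_of_injective hinj).1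
      rw [hq]
      exact hc₀
    exact htree.IsAcyclic q hqc
  have hinj' : Function.Injective ⇑(auxHom T') := Subtype.val_injective
  have hacyclic : T'.coe.IsAcyclic := by
    intro v p hp
    exact hacyc v.val (p.map (auxHom T')) (hp.map hinj')
  have hu₃' : u₃ ∈ T'.verts := by rw [hT'verts]; trivial
  have hconn : T'.coe.Connected := by
    have key : ∀ a : T'.verts, T'.coe.Reachable a ⟨u₃, hu₃'⟩ := by
      rintro ⟨a, haT⟩
      by_cases ha : a ∈ T₀.verts
      · exact (htree.isConnected.preconnected ⟨a, ha⟩ ⟨u₃, hu₃⟩).map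
          (⟨fun x => ⟨x.val, by rw [hT'verts]; trivial⟩, fun {x y} h => hle h⟩ :
            T₀.coe →g T'.coe)
      · have hadj' : T'.coe.Adj ⟨u₃, hu₃'⟩ ⟨a, haT⟩ :=
          (hT'adj u₃ a).2 (Or.inr (Or.inl ⟨rfl, ha, hadj a ha⟩))
        exact hadj'.symm.reachable
    have hne : Nonempty T'.verts := ⟨⟨u₃, hu₃'⟩⟩
    exact Connected.mk (fun a b => (key a).trans (key b).symm)
  exact ⟨⟨hconn, hacyclic⟩, hdeg'⟩
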